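/- Let U be a unitary operator on G and set A = i(1+U) and B = 1−U. Then ‖M^{A,B} x‖ = 2‖x‖ for every x ∈ G ⊕ G; equivalently, (1/2)·M^{A,B} is a unitary operator on G ⊕ G. -/

import Mathlib

open ContinuousLinearMap

variable {G : Type*} [NormedAddCommGroup G] [InnerProductSpace ℂ G] [CompleteSpace G]

/-- The operator `M^{A,B}` on `G × G`, `(x₁,x₂) ↦ (A x₁ - B x₂, B x₁ + A x₂)`. -/
noncomputable def MAB (A B : G →L[ℂ] G) : (G × G) →L[ℂ] (G × G) :=
  ((A.comp (fst ℂ G G)) - (B.comp (snd ℂ G G))).prod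
    ((B.comp (fst ℂ G G)) + (A.comp (snd ℂ G G)))

/-- The linear relation `Λ^{A,B} = {(x₁,x₂) : A x₁ = B x₂}`. -/
def LambdaAB (A B : G →L[ℂ] G) : Submodule ℂ (G × G) where
  carrier := {p | A p.1 = B p.2}
  add_mem' := by
    intro a b ha hb
    simp only [Set.mem_setOf_eq] at *
    simp [ha, hb]
  zero_mem' := by simp
  smul_mem' := by
    intro c p hp
    simp only [Set.mem_setOf_eq] at *
    simp [hp]

/-- The adjoint of a linear relation. -/
def relAdjoint (Λ : Submodule ℂ (G × G)) : Submodule ℂ (G × G) where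
  carrier := {p | ∀ q ∈ Λ, (inner ℂ p.1 q.2 : ℂ) = inner ℂ p.2 q.1}
  add_mem' := by
    intro a b ha hb q hq
    simp [inner_add_left, ha q hq, hb q hq]
  zero_mem' := by
    intro q hq; simp
  smul_mem' := by
    intro c p hp q hq
    simp [inner_smul_left, hp q hq]

/-- A linear relation is self-adjoint if it equals its adjoint. -/
def IsSelfAdjointRel (Λ : Submodule ℂ (G × G)) : Prop := relAdjoint Λ = Λ

/-- A bounded operator is boundedly invertible if it has a bounded two-sided inverse. -/
def IsBoundedlyInvertible {E F : Type*} [NormedAddCommGroup E] [NormedSpace ℂ E]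
    [NormedAddCommGroup F] [NormedSpace ℂ F] (T : E →L[ℂ] F) : Prop :=
  ∃ T' : F →L[ℂ] E, (∀ x, T' (T x) = x) ∧ (∀ y, T (T' y) = y)

/-- The pair `(A,B)` is normalized if `A B* = B A*` and `M^{A,B}` is boundedly invertible. -/
noncomputable def IsNormalized (A B : G →L[ℂ] G) : Prop :=
  A ∘L adjoint B = B ∘L adjoint A ∧ IsBoundedlyInvertible (MAB A B)

/-- For unitary `U` and `A = i(1+U)`, `B = 1-U`, one has
`‖M^{A,B} x‖ = 2 ‖x‖` in the Hilbert direct sum `G ⊕ G` (expressed via the squared norms of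
the two components), and `M^{A,B}` is surjective; i.e. `(1/2) M^{A,B}` is unitary on `G ⊕ G`. -/
theorem cayley_MAB_norm (U : G →L[ℂ] G) (hU : U ∈ unitary (G →L[ℂ] G)) :
    (∀ x₁ x₂ : G,
        ‖(Complex.I • (1 + U)) x₁ - (1 - U) x₂‖ ^ 2 + ‖(1 - U) x₁ + (Complex.I • (1 + U)) x₂‖ ^ 2
          = 2 ^ 2 * (‖x₁‖ ^ 2 + ‖x₂‖ ^ 2)) ∧
      Function.Surjective (MAB (Complex.I • (1 + U)) (1 - U)) := by
  have hin : ∀ a b : G, (inner ℂ (U a) (U b) : ℂ) = inner ℂ a b := fun a b =>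
    ContinuousLinearMap.inner_map_map_of_mem_unitary hU a b
  have hUV : ∀ z : G, U ((star U) z) = z := by
    intro z
    have h := (Unitary.mem_iff.mp hU).2
    calc U ((star U) z) = (U * star U) z := rfl
      _ = z := by rw [h]; rfl
  constructor
  · intro x₁ x₂
    have key : (inner ℂ ((Complex.I • (1 + U)) x₁ - (1 - U) x₂)
          ((Complex.I • (1 + U)) x₁ - (1 - U) x₂) : ℂ)
        + inner ℂ ((1 - U) x₁ + (Complex.I • (1 + U)) x₂)
          ((1 - U) x₁ + (Complex.I • (1 + U)) x₂)
        = 4 * (inner ℂ x₁ x₁ + inner ℂ x₂ x₂) := by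
      simp only [ContinuousLinearMap.smul_apply, ContinuousLinearMap.add_apply,
        ContinuousLinearMap.sub_apply, ContinuousLinearMap.one_apply,
        inner_sub_left, inner_sub_right, inner_add_left, inner_add_right,
        inner_smul_left, inner_smul_right, hin, Complex.conj_I]
      ring_nf
      simp only [Complex.I_sq]
      ring
    rw [inner_self_eq_norm_sq_to_K (𝕜 := ℂ), inner_self_eq_norm_sq_to_K (𝕜 := ℂ),
      inner_self_eq_norm_sq_to_K (𝕜 := ℂ), inner_self_eq_norm_sq_to_K (𝕜 := ℂ)] at key
    have key' : ‖(Complex.I • (1 + U)) x₁ - (1 - U) x₂‖ ^ 2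
        + ‖(1 - U) x₁ + (Complex.I • (1 + U)) x₂‖ ^ 2
        = 4 * (‖x₁‖ ^ 2 + ‖x₂‖ ^ 2) := by
      rw [show (4:ℂ) = RCLike.ofReal (4:ℝ) from by simp, ← RCLike.ofReal_pow,
        ← RCLike.ofReal_pow, ← RCLike.ofReal_pow, ← RCLike.ofReal_pow, ← RCLike.ofReal_add,
        ← RCLike.ofReal_add, ← RCLike.ofReal_mul] at key
      exact RCLike.ofReal_injective (K := ℂ) key
    rw [key']; ring
  · rintro ⟨y₁, y₂⟩
    refine ⟨((1/4 : ℂ) • (-(Complex.I • (y₁ + (star U) y₁)) + (y₂ - (star U) y₂)),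
      (1/4 : ℂ) • (-(y₁ - (star U) y₁) - Complex.I • (y₂ + (star U) y₂))), ?_⟩
    simp only [MAB, ContinuousLinearMap.prod_apply, ContinuousLinearMap.sub_apply,
      ContinuousLinearMap.add_apply, ContinuousLinearMap.comp_apply,
      ContinuousLinearMap.coe_fst', ContinuousLinearMap.coe_snd',
      ContinuousLinearMap.smul_apply, ContinuousLinearMap.one_apply,
      map_smul, map_add, map_sub, map_neg, hUV]
    refine Prod.ext ?_ ?_ <;>
      · match_scalars <;> simp [Complex.I_mul_I, Complex.I_sq] <;> ring_nf <;>
          simp [Complex.I_sq] <;> ring
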